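/- Let T be a rooted tree with d_i the recursively defined rational functions d_i(x) = x - Σ_{j child of i} 1/d_j(x). Suppose θ₀ ∈ ℝ is a simple zero of d_j for a vertex j with parent j-1, and θ₀ is not a zero or pole of the other summands in d_{j-1}. Then θ₀ is a pole of d_{j-1}, and for sufficiently small ε > 0: d_{j-1}(θ₀ - ε) > 0, d_{j-1}(θ₀ + ε) < 0, d_j(θ₀ - ε) < 0, and d_j(θ₀ + ε) > 0. -/

import Mathlib

open Finset

/-- The Jacobs–Trevisan function of vertex `i` of a rooted tree on `Fin n`
given by a parent map (root `0`, `parent j < j` for `j ≠ 0`), evaluated at a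
real number:
`d i θ = θ - ∑_{j child of i} (d j θ)⁻¹` (with `(0 : ℝ)⁻¹ = 0` by convention). -/
noncomputable def dReal (n : ℕ) (parent : Fin n → Fin n) (i : Fin n) (θ : ℝ) : ℝ :=
  θ - ∑ j ∈ (Finset.univ.filter fun j => parent j = i ∧ i < j).attach,
      (dReal n parent j.1 θ)⁻¹
termination_by n - i.1
decreasing_by
  have hj := j.2
  simp only [Finset.mem_filter, Finset.mem_univ, true_and] at hj
  have := j.1.isLt
  omega

/-- `j` is a descendant of `i` (possibly `j = i`): some iterate of the parent
map sends `j` to `i`. -/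
def Desc (n : ℕ) (parent : Fin n → Fin n) (i j : Fin n) : Prop :=
  ∃ k ∈ Finset.range (n + 1), parent^[k] j = i

section Aux

variable {n : ℕ} (hn : 0 < n) {parent : Fin n → Fin n}
  (hroot : parent ⟨0, hn⟩ = ⟨0, hn⟩)
  (hpar : ∀ j : Fin n, j ≠ ⟨0, hn⟩ → parent j < j)

include hroot hpar

lemma parent_le (x : Fin n) : parent x ≤ x := by
  by_cases hx : x = ⟨0, hn⟩
  · subst hx; rw [hroot]
  · exact (hpar x hx).le

lemma iterate_le (m : ℕ) (x : Fin n) : parent^[m] x ≤ x := by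
  induction m generalizing x with
  | zero => simp
  | succ m ih =>
    rw [Function.iterate_succ_apply]
    exact le_trans (ih (parent x)) (parent_le hn hroot hpar x)

lemma desc_of_iterate {i j : Fin n} (m : ℕ) (h : parent^[m] j = i) :
    Desc n parent i j := by
  suffices h' : ∃ k ≤ j.1, parent^[k] j = i by
    obtain ⟨k, hk, hk'⟩ := h'
    exact ⟨k, Finset.mem_range.mpr (by have := j.isLt; omega), hk'⟩
  induction m generalizing j with
  | zero => exact ⟨0, Nat.zero_le _, h⟩
  | succ m ih =>
    by_cases hj : j = ⟨0, hn⟩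
    · rw [Function.iterate_succ_apply] at h
      subst hj
      rw [hroot] at h
      exact ih h
    · have hlt := hpar j hj
      rw [Function.iterate_succ_apply] at h
      obtain ⟨k, hk, hk'⟩ := ih h
      refine ⟨k + 1, by omega, ?_⟩
      rw [Function.iterate_succ_apply]
      exact hk'

lemma desc_le {i j : Fin n} (h : Desc n parent i j) : i ≤ j := by
  obtain ⟨k, -, hk⟩ := h
  exact hk ▸ iterate_le hn hroot hpar k j

lemma desc_refl (i : Fin n) : Desc n parent i i :=
  desc_of_iterate hn hroot hpar 0 rfl

lemma desc_child {i j : Fin n} (h : parent j = i) : Desc n parent i j :=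
  desc_of_iterate hn hroot hpar 1 (by rwa [Function.iterate_one])

lemma desc_trans_child {i j k : Fin n} (hj : parent j = i)
    (h : Desc n parent j k) : Desc n parent i k := by
  obtain ⟨m, -, hm⟩ := h
  exact desc_of_iterate hn hroot hpar (m + 1)
    (by rw [Function.iterate_succ_apply', hm, hj])

lemma desc_trans {i j k : Fin n} (hij : Desc n parent i j)
    (hjk : Desc n parent j k) : Desc n parent i k := by
  obtain ⟨a, -, ha⟩ := hij
  obtain ⟨b, -, hb⟩ := hjk
  exact desc_of_iterate hn hroot hpar (a + b)
    (by rw [Function.iterate_add_apply, hb, ha])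

/-- a descendant of a non-`c` child of `p` is not `c` -/
lemma desc_ne_c {p c j k : Fin n} (hpc : parent c = p)
    (_hj : parent j = p) (hpj : p < j) (hjc : j ≠ c) (h : Desc n parent j k) :
    k ≠ c := by
  rintro rfl
  obtain ⟨m, -, hm⟩ := h
  cases m with
  | zero => exact hjc hm.symm
  | succ m =>
    rw [Function.iterate_succ_apply, hpc] at hm
    have h2 : parent^[m] p ≤ p := iterate_le hn hroot hpar m p
    rw [hm] at h2
    exact absurd h2 (not_le.mpr hpj)

lemma dReal_hasDerivAt : ∀ m : ℕ, ∀ i : Fin n, n - i.1 ≤ m → ∀ θ : ℝ,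
    (∀ k, Desc n parent i k → k ≠ i → dReal n parent k θ ≠ 0) →
    ∃ D : ℝ, 1 ≤ D ∧ HasDerivAt (dReal n parent i) D θ := by
  intro m
  induction m with
  | zero => intro i hi; exact absurd hi (by have := i.isLt; omega)
  | succ m ih =>
    intro i hi θ h
    have key : ∀ j : {x // x ∈ Finset.univ.filter fun j => parent j = i ∧ i < j},
        ∃ D : ℝ, 1 ≤ D ∧ HasDerivAt (dReal n parent j.1) D θ := by
      intro j
      have hj := j.2
      simp only [Finset.mem_filter, Finset.mem_univ, true_and] at hj
      refine ih j.1 (by have := j.1.isLt; have h2 : i.1 < j.1.1 := hj.2; omega) θ ?_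
      intro k hk hkj
      have hik : i < k := lt_of_lt_of_le hj.2 (desc_le hn hroot hpar hk)
      exact h k (desc_trans_child hn hroot hpar hj.1 hk) (ne_of_gt hik)
    choose D hD1 hD2 using key
    have hne : ∀ j : {x // x ∈ Finset.univ.filter fun j => parent j = i ∧ i < j},
        dReal n parent j.1 θ ≠ 0 := by
      intro j
      have hj := j.2
      simp only [Finset.mem_filter, Finset.mem_univ, true_and] at hj
      exact h j.1 (desc_child hn hroot hpar hj.1) (ne_of_gt hj.2)
    have hsum : HasDerivAt
        (fun t => ∑ j ∈ (Finset.univ.filter fun j => parent j = i ∧ i < j).attach,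
          (dReal n parent j.1 t)⁻¹)
        (∑ j ∈ (Finset.univ.filter fun j => parent j = i ∧ i < j).attach,
          (-(D j) / (dReal n parent j.1 θ) ^ 2)) θ :=
      HasDerivAt.fun_sum fun j _ => (hD2 j).inv (hne j)
    refine ⟨1 - ∑ j ∈ (Finset.univ.filter fun j => parent j = i ∧ i < j).attach,
        (-(D j) / (dReal n parent j.1 θ) ^ 2), ?_, ?_⟩
    · have hle : ∑ j ∈ (Finset.univ.filter fun j => parent j = i ∧ i < j).attach,
          (-(D j) / (dReal n parent j.1 θ) ^ 2) ≤ 0 :=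
        Finset.sum_nonpos fun j _ => div_nonpos_of_nonpos_of_nonneg (by linarith [hD1 j]) (sq_nonneg _)
      linarith
    · have heq : dReal n parent i =
          fun t => t - ∑ j ∈ (Finset.univ.filter fun j => parent j = i ∧ i < j).attach,
            (dReal n parent j.1 t)⁻¹ := by
        funext t; rw [dReal]
      rw [heq]
      exact (hasDerivAt_id θ).sub hsum

lemma dReal_eventually_ne (i : Fin n) (θ₀ : ℝ)
    (h : ∀ k, Desc n parent i k → k ≠ i → dReal n parent k θ₀ ≠ 0) :
    ∀ᶠ θ in nhds θ₀, ∀ k, Desc n parent i k → k ≠ i → dReal n parent k θ ≠ 0 := by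
  classical
  have hfin : ∀ᶠ θ in nhds θ₀,
      ∀ k ∈ Finset.univ.filter (fun k => Desc n parent i k ∧ k ≠ i),
        dReal n parent k θ ≠ 0 := by
    rw [Filter.eventually_all_finset]
    intro k hk
    simp only [Finset.mem_filter, Finset.mem_univ, true_and] at hk
    have hsub : ∀ l, Desc n parent k l → l ≠ k → dReal n parent l θ₀ ≠ 0 := by
      intro l hl hlk
      refine h l (desc_trans hn hroot hpar hk.1 hl) ?_
      rintro rfl
      exact hk.2 (le_antisymm (desc_le hn hroot hpar hl)
        (desc_le hn hroot hpar hk.1))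
    obtain ⟨D, -, hD⟩ := dReal_hasDerivAt hn hroot hpar n k (by omega) θ₀ hsub
    exact hD.continuousAt.eventually_ne (h k hk.1 hk.2)
  filter_upwards [hfin] with θ hθ k hk hki
  exact hθ k (by simp only [Finset.mem_filter, Finset.mem_univ, true_and]; exact ⟨hk, hki⟩)

end Aux

/-- Sign dynamics at a zero of a child function.  Let `c` be a child of `p`
(`parent c = p`, `p < c`), let `θ₀` be a zero of `d c`, and suppose `θ₀` is not
a zero or pole of the other summands in the recursion for `d p` (i.e. every
strict descendant of `p` other than `c` has nonzero value at `θ₀`; since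
`d c` has derivative `≥ 1`, its zero at `θ₀` is simple).  Then `θ₀` is a pole
of `d p`, and for all sufficiently small `ε > 0`:
`d p (θ₀ - ε) > 0`, `d p (θ₀ + ε) < 0`, `d c (θ₀ - ε) < 0`, `d c (θ₀ + ε) > 0`. -/
theorem dReal_sign_change (n : ℕ) (hn : 0 < n) (parent : Fin n → Fin n)
    (hroot : parent ⟨0, hn⟩ = ⟨0, hn⟩)
    (hpar : ∀ j : Fin n, j ≠ ⟨0, hn⟩ → parent j < j)
    (p c : Fin n) (hpc : parent c = p) (hcp : p < c) (θ₀ : ℝ)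
    (hz : dReal n parent c θ₀ = 0)
    (hother : ∀ j : Fin n, Desc n parent p j → j ≠ p → j ≠ c →
      dReal n parent j θ₀ ≠ 0) :
    Filter.Tendsto (fun t => |dReal n parent p t|)
        (nhdsWithin θ₀ {θ₀}ᶜ) Filter.atTop
    ∧ ∃ ε₀ > 0, ∀ ε : ℝ, 0 < ε → ε < ε₀ →
        0 < dReal n parent p (θ₀ - ε) ∧ dReal n parent p (θ₀ + ε) < 0 ∧
        dReal n parent c (θ₀ - ε) < 0 ∧ 0 < dReal n parent c (θ₀ + ε) := by
  have hcne : ∀ k, Desc n parent c k → k ≠ c → dReal n parent k θ₀ ≠ 0 := by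
    intro k hk hkc
    refine hother k (desc_trans_child hn hroot hpar hpc hk) ?_ hkc
    exact ne_of_gt (lt_of_lt_of_le hcp (desc_le hn hroot hpar hk))
  obtain ⟨Dc, hDc1, hDc⟩ := dReal_hasDerivAt hn hroot hpar n c (by omega) θ₀ hcne
  have hccont : ContinuousAt (dReal n parent c) θ₀ := hDc.continuousAt
  have hG : ∃ g : ℝ → ℝ, ContinuousAt g θ₀ ∧
      ∀ t, dReal n parent p t = g t - (dReal n parent c t)⁻¹ := by
    have hcSp : c ∈ Finset.univ.filter (fun j => parent j = p ∧ p < j) := by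
      simp [hpc, hcp]
    refine ⟨fun t =>
      t - ∑ j ∈ (Finset.univ.filter (fun j => parent j = p ∧ p < j)).erase c,
        (dReal n parent j t)⁻¹, ?_, ?_⟩
    · refine continuousAt_id.sub (tendsto_finset_sum _ ?_)
      intro j hj
      rw [Finset.mem_erase] at hj
      obtain ⟨hjc, hj2⟩ := hj
      simp only [Finset.mem_filter, Finset.mem_univ, true_and] at hj2
      have hsub : ∀ k, Desc n parent j k → k ≠ j → dReal n parent k θ₀ ≠ 0 := by
        intro k hk hkj
        refine hother k (desc_trans_child hn hroot hpar hj2.1 hk) ?_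
          (desc_ne_c hn hroot hpar hpc hj2.1 hj2.2 hjc hk)
        exact ne_of_gt (lt_of_lt_of_le hj2.2 (desc_le hn hroot hpar hk))
      obtain ⟨D, -, hD⟩ := dReal_hasDerivAt hn hroot hpar n j (by omega) θ₀ hsub
      have hjne : dReal n parent j θ₀ ≠ 0 :=
        hother j (desc_child hn hroot hpar hj2.1) (ne_of_gt hj2.2) hjc
      exact hD.continuousAt.inv₀ hjne
    · intro t
      rw [dReal, Finset.sum_attach _ (fun j => (dReal n parent j t)⁻¹),
        ← Finset.add_sum_erase _ _ hcSp]
      ring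
  obtain ⟨g, hgcont, hdp⟩ := hG
  have hr : (0:ℝ) < (|g θ₀| + 1)⁻¹ := inv_pos.mpr (by positivity)
  have hev1 := dReal_eventually_ne hn hroot hpar c θ₀ hcne
  have hcc0 : Filter.Tendsto (dReal n parent c) (nhds θ₀) (nhds 0) := hz ▸ hccont.tendsto
  have hb2 : ∀ᶠ y in nhds (0:ℝ), |y| < (|g θ₀| + 1)⁻¹ := by
    filter_upwards [Metric.ball_mem_nhds (0:ℝ) hr] with y hy
    simpa [Real.dist_eq] using hy
  have hev2 := hcc0.eventually hb2
  have hb3 : ∀ᶠ y in nhds (g θ₀), |y| < |g θ₀| + 1 := by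
    filter_upwards [Metric.ball_mem_nhds (g θ₀) one_pos] with y hy
    rw [Metric.mem_ball, Real.dist_eq] at hy
    have h1 : |y| - |g θ₀| ≤ |y - g θ₀| := abs_sub_abs_le_abs_sub y (g θ₀)
    linarith
  have hev3 := hgcont.tendsto.eventually hb3
  obtain ⟨δ, hδpos, hδ⟩ := Metric.eventually_nhds_iff.mp ((hev1.and (hev2.and hev3)))
  have hderiv : ∀ x ∈ Metric.ball θ₀ δ,
      ∃ D : ℝ, 1 ≤ D ∧ HasDerivAt (dReal n parent c) D x := fun x hx =>
    dReal_hasDerivAt hn hroot hpar n c (by omega) x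
      (hδ (by rwa [Metric.mem_ball] at hx)).1
  have hmono : StrictMonoOn (dReal n parent c) (Metric.ball θ₀ δ) := by
    apply strictMonoOn_of_deriv_pos (convex_ball θ₀ δ)
    · intro x hx
      obtain ⟨D, -, hD⟩ := hderiv x hx
      exact hD.continuousAt.continuousWithinAt
    · intro x hx
      rw [Metric.isOpen_ball.interior_eq] at hx
      obtain ⟨D, hD1, hD⟩ := hderiv x hx
      rw [hD.deriv]; linarith
  have hθ₀mem : θ₀ ∈ Metric.ball θ₀ δ := Metric.mem_ball_self hδpos
  have hcne' : ∀ t ∈ Metric.ball θ₀ δ, t ≠ θ₀ → dReal n parent c t ≠ 0 := by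
    intro t ht hne
    rcases lt_or_gt_of_ne hne with h | h
    · exact ne_of_lt (lt_of_lt_of_le (hmono ht hθ₀mem h) (le_of_eq hz))
    · exact ne_of_gt (lt_of_le_of_lt (ge_of_eq hz) (hmono hθ₀mem ht h))
  constructor
  · have habs : Filter.Tendsto (fun t => |dReal n parent c t|)
        (nhdsWithin θ₀ {θ₀}ᶜ) (nhdsWithin 0 (Set.Ioi 0)) := by
      rw [tendsto_nhdsWithin_iff]
      constructor
      · have h0 : Filter.Tendsto (fun t => |dReal n parent c t|) (nhds θ₀) (nhds 0) := by
          have := hcc0.abs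
          rwa [abs_zero] at this
        exact h0.mono_left nhdsWithin_le_nhds
      · filter_upwards [mem_nhdsWithin_of_mem_nhds (Metric.ball_mem_nhds θ₀ hδpos),
          self_mem_nhdsWithin] with t ht ht'
        exact Set.mem_Ioi.mpr (abs_pos.mpr (hcne' t ht ht'))
    have hinv := tendsto_inv_nhdsGT_zero.comp habs
    have hg3 : ∀ᶠ t in nhdsWithin θ₀ {θ₀}ᶜ, |g t| < |g θ₀| + 1 :=
      hev3.filter_mono nhdsWithin_le_nhds
    refine Filter.tendsto_atTop_mono' _ ?_
      (Filter.tendsto_atTop_add_const_right _ (-(|g θ₀| + 1)) hinv)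
    filter_upwards [hg3] with t ht
    show ((fun x : ℝ => x⁻¹) ∘ fun t => |dReal n parent c t|) t + (-(|g θ₀| + 1))
      ≤ |dReal n parent p t|
    simp only [Function.comp_apply]
    rw [hdp t]
    have h1 : |dReal n parent c t|⁻¹ = |(dReal n parent c t)⁻¹| := (abs_inv _).symm
    have h2 : |(dReal n parent c t)⁻¹| - |g t| ≤ |(dReal n parent c t)⁻¹ - g t| :=
      abs_sub_abs_le_abs_sub _ _
    have h3 : |(dReal n parent c t)⁻¹ - g t| = |g t - (dReal n parent c t)⁻¹| :=
      abs_sub_comm _ _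
    linarith
  · refine ⟨δ, hδpos, fun ε hε hεδ => ?_⟩
    have hd1 : dist (θ₀ - ε) θ₀ < δ := by
      rw [Real.dist_eq, show θ₀ - ε - θ₀ = -ε by ring, abs_neg, abs_of_pos hε]
      exact hεδ
    have hd2 : dist (θ₀ + ε) θ₀ < δ := by
      rw [Real.dist_eq, show θ₀ + ε - θ₀ = ε by ring, abs_of_pos hε]
      exact hεδ
    have hmem1 : θ₀ - ε ∈ Metric.ball θ₀ δ := Metric.mem_ball.mpr hd1
    have hmem2 : θ₀ + ε ∈ Metric.ball θ₀ δ := Metric.mem_ball.mpr hd2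
    have hcl : dReal n parent c (θ₀ - ε) < 0 :=
      lt_of_lt_of_le (hmono hmem1 hθ₀mem (by linarith)) (le_of_eq hz)
    have hcr : 0 < dReal n parent c (θ₀ + ε) :=
      lt_of_le_of_lt (ge_of_eq hz) (hmono hθ₀mem hmem2 (by linarith))
    obtain ⟨-, h2l, h3l⟩ := hδ hd1
    obtain ⟨-, h2r, h3r⟩ := hδ hd2
    refine ⟨?_, ?_, hcl, hcr⟩
    · rw [hdp]
      have h4 : (|g θ₀| + 1) < (-(dReal n parent c (θ₀ - ε)))⁻¹ := by
        have h5 : -(dReal n parent c (θ₀ - ε)) < (|g θ₀| + 1)⁻¹ :=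
          lt_of_le_of_lt (neg_le_abs _) h2l
        have h6 := inv_strictAnti₀ (by linarith : (0:ℝ) < -(dReal n parent c (θ₀ - ε))) h5
        rwa [inv_inv] at h6
      have h7 : (-(dReal n parent c (θ₀ - ε)))⁻¹ = -(dReal n parent c (θ₀ - ε))⁻¹ := inv_neg
      have h8 : -(|g θ₀| + 1) < g (θ₀ - ε) := (abs_lt.mp h3l).1
      linarith
    · rw [hdp]
      have h4 : (|g θ₀| + 1) < (dReal n parent c (θ₀ + ε))⁻¹ := by
        have h5 : dReal n parent c (θ₀ + ε) < (|g θ₀| + 1)⁻¹ :=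
          lt_of_le_of_lt (le_abs_self _) h2r
        have h6 := inv_strictAnti₀ hcr h5
        rwa [inv_inv] at h6
      have h8 : g (θ₀ + ε) < |g θ₀| + 1 := (abs_lt.mp h3r).2
      linarith
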